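/- arXiv:1405.7844 — 7 statements merged into one kernel-verified Lean document; each statement's English description precedes it below -/
import Mathlib

section
/- Let $T$ be a measure-preserving transformation of a probability space $(X,\mathcal{B},\mu)$, $\{W_n\}$ a sequence of measurable sets, and $\{q_n\}$ an increasing sequence of natural numbers. Then the following are equivalent: (a) for every measurable set $A$, $\mu((T^{-q_n}A \triangle A) \cap W_n) \to 0$; (b) for every $f \in L^1(X,\mu)$, the functions $\chi_{W_n} \cdot (f \circ T^{q_n} - f)$ converge to $0$ in measure. -/
open MeasureTheory Filter
open scoped ENNReal symmDiff Topology

/-!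
Write `D_n f = ∫_{W_n} |f ∘ T^{q_n} - f| dμ`. For `f = c χ_A` this is
`|c| μ((T^{-q_n}A ∆ A) ∩ W_n)`, so rigidity says `D_n f → 0` on indicator functions.
Each `D_n` is subadditive and, `T` being measure preserving, bounded by `2‖f‖₁`; hence
`D_n f → 0` for all `f ∈ L¹` by density, and Markov's inequality gives convergence in measure.
Conversely, for `f = χ_A` the function `χ_{W_n} (f ∘ T^{q_n} - f)` has absolute value `1`
exactly on `(T^{-q_n}A ∆ A) ∩ W_n`.
-/

theorem Set.enorm_indicator_comp_sub_indicator {X E : Type*} [NormedAddCommGroup E]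
    (S : X → X) (s : Set X) (c : E) (x : X) :
    ‖(s.indicator (fun _ => c) ∘ S - s.indicator fun _ => c) x‖ₑ =
      ((S ⁻¹' s) ∆ s).indicator (fun _ => ‖c‖ₑ) x := by
  rw [← enorm_indicator_eq_indicator_enorm]
  exact (Set.apply_indicator_symmDiff (g := (‖·‖ₑ : E → ℝ≥0∞)) enorm_neg
    (S ⁻¹' s) s (fun _ => c) x).symm

namespace MeasureTheory

variable {X E ι : Type*} [MeasurableSpace X] [NormedAddCommGroup E] {μ : Measure X}
  {l : Filter ι} {S : X → X} {f g : X → E}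

theorem MeasurePreserving.eLpNorm_comp_sub_restrict_le (hS : MeasurePreserving S μ μ)
    (hf : AEStronglyMeasurable f μ) (W : Set X) :
    eLpNorm (f ∘ S - f) 1 (μ.restrict W) ≤ 2 * eLpNorm f 1 μ := calc
  _ ≤ eLpNorm (f ∘ S - f) 1 μ := eLpNorm_mono_measure _ Measure.restrict_le_self
  _ ≤ eLpNorm (f ∘ S) 1 μ + eLpNorm f 1 μ :=
    eLpNorm_sub_le (hf.comp_measurePreserving hS) hf le_rfl
  _ = 2 * eLpNorm f 1 μ := by rw [eLpNorm_comp_measurePreserving hf hS, two_mul]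

theorem MeasurePreserving.eLpNorm_comp_sub_restrict_add_le (hS : MeasurePreserving S μ μ)
    (hf : AEStronglyMeasurable f μ) (hg : AEStronglyMeasurable g μ) (W : Set X) :
    eLpNorm ((f + g) ∘ S - (f + g)) 1 (μ.restrict W) ≤
      eLpNorm (f ∘ S - f) 1 (μ.restrict W) + eLpNorm (g ∘ S - g) 1 (μ.restrict W) := by
  have hsplit : (f + g) ∘ S - (f + g) = (f ∘ S - f) + (g ∘ S - g) := by
    ext x; simp only [Function.comp_apply, Pi.add_apply, Pi.sub_apply]; abel
  rw [hsplit]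
  exact eLpNorm_add_le ((hf.comp_measurePreserving hS).sub hf).restrict
    ((hg.comp_measurePreserving hS).sub hg).restrict le_rfl

theorem eLpNorm_indicator_comp_sub_indicator_restrict (hS : Measurable S) {s : Set X}
    (hs : MeasurableSet s) (c : E) (W : Set X) :
    eLpNorm (s.indicator (fun _ => c) ∘ S - s.indicator fun _ => c) 1 (μ.restrict W) =
      ‖c‖ₑ * μ ((S ⁻¹' s) ∆ s ∩ W) := by
  have hmeas : MeasurableSet ((S ⁻¹' s) ∆ s) := (hS hs).symmDiff hs
  simp_rw [eLpNorm_one_eq_lintegral_enorm, Set.enorm_indicator_comp_sub_indicator,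
    lintegral_indicator_const hmeas, Measure.restrict_apply hmeas]

theorem tendstoInMeasure_indicator_of_tendsto_eLpNorm_restrict {W : ι → Set X}
    {g : ι → X → E} (hg : ∀ i, AEStronglyMeasurable (g i) μ)
    (h : Tendsto (fun i => eLpNorm (g i) 1 (μ.restrict (W i))) l (𝓝 0)) :
    TendstoInMeasure μ (fun i => (W i).indicator (g i)) l 0 := by
  refine tendstoInMeasure_of_ne_top fun ε hε hε_top => ?_
  have markov : ∀ i, μ {x | ε ≤ edist ((W i).indicator (g i) x) 0} ≤
      ε⁻¹ * eLpNorm (g i) 1 (μ.restrict (W i)) := fun i => calc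
    _ ≤ μ ({x | ε ≤ ‖g i x‖ₑ} ∩ W i) := measure_mono fun x hx => by
        by_cases hxW : x ∈ W i
        · simp_all [edist_zero_right]
        · simp_all [hε.ne']
    _ ≤ μ.restrict (W i) {x | ε ≤ ‖g i x‖ₑ} := Measure.le_restrict_apply _ _
    _ ≤ ε⁻¹ * eLpNorm (g i) 1 (μ.restrict (W i)) := by
        simpa using meas_ge_le_mul_pow_eLpNorm_enorm _ one_ne_zero ENNReal.one_ne_top
          (hg i).restrict hε.ne' (by simp [hε_top])
  refine tendsto_of_tendsto_of_tendsto_of_le_of_le tendsto_const_nhds ?_ (fun _ => zero_le)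
    markov
  simpa using ENNReal.Tendsto.const_mul h (Or.inr (ENNReal.inv_ne_top.2 hε.ne'))

theorem tendsto_eLpNorm_comp_sub_restrict_of_integrable {S : ι → X → X} {W : ι → Set X}
    (hS : ∀ i, MeasurePreserving (S i) μ μ)
    (hrigid : ∀ s, MeasurableSet s → Tendsto (fun i => μ ((S i ⁻¹' s) ∆ s ∩ W i)) l (𝓝 0))
    (hf : Integrable f μ) :
    Tendsto (fun i => eLpNorm (f ∘ S i - f) 1 (μ.restrict (W i))) l (𝓝 0) := by
  let P : (X → E) → Prop := fun g => AEStronglyMeasurable g μ ∧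
    Tendsto (fun i => eLpNorm (g ∘ S i - g) 1 (μ.restrict (W i))) l (𝓝 0)
  have hP_indicator (c : E) {s : Set X} (hs : MeasurableSet s) : P (s.indicator fun _ => c) := by
    refine ⟨aestronglyMeasurable_const.indicator hs, ?_⟩
    simp_rw [eLpNorm_indicator_comp_sub_indicator_restrict (hS _).measurable hs]
    simpa using ENNReal.Tendsto.const_mul (hrigid s hs) (Or.inr enorm_ne_top)
  have hP_add (g h : X → E) (hg : P g) (hh : P h) : P (g + h) :=
    ⟨hg.1.add hh.1, tendsto_of_tendsto_of_tendsto_of_le_of_le tendsto_const_nhds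
      (by simpa using hg.2.add hh.2) (fun _ => zero_le)
      (fun i => (hS i).eLpNorm_comp_sub_restrict_add_le hg.1 hh.1 _)⟩
  refine ENNReal.tendsto_nhds_zero.2 fun ε hε => ?_
  set δ := ε / 4
  have hδ : 0 < δ := ENNReal.div_pos hε.ne' (by norm_num)
  obtain ⟨g, hfg, hg⟩ := (memLp_one_iff_integrable.2 hf).induction_dense ENNReal.one_ne_top P
    (fun c s hs _ _ _ => ⟨_, by simp, hP_indicator c hs⟩) hP_add (fun _ h => h.1) hδ.ne'
  filter_upwards [ENNReal.tendsto_nhds_zero.1 hg.2 (2 * δ) (by positivity)] with i hi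
  calc eLpNorm (f ∘ S i - f) 1 (μ.restrict (W i))
      = eLpNorm ((g + (f - g)) ∘ S i - (g + (f - g))) 1 (μ.restrict (W i)) := by
        rw [add_sub_cancel]
    _ ≤ eLpNorm (g ∘ S i - g) 1 (μ.restrict (W i)) +
          eLpNorm ((f - g) ∘ S i - (f - g)) 1 (μ.restrict (W i)) :=
        (hS i).eLpNorm_comp_sub_restrict_add_le hg.1 (hf.1.sub hg.1) _
    _ ≤ 2 * δ + 2 * δ := by
        gcongr
        exact ((hS i).eLpNorm_comp_sub_restrict_le (hf.1.sub hg.1) _).trans (by gcongr)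
    _ = ε := by
        rw [← add_mul, two_add_two_eq_four,
          ENNReal.mul_div_cancel four_ne_zero ENNReal.ofNat_ne_top]

theorem tendsto_measure_preimage_symmDiff_inter_of_tendstoInMeasure {S : ι → X → X}
    {W : ι → Set X} {s : Set X} {c : E} (hc : c ≠ 0)
    (h : TendstoInMeasure μ
      (fun i => (W i).indicator (s.indicator (fun _ => c) ∘ S i - s.indicator fun _ => c)) l 0) :
    Tendsto (fun i => μ ((S i ⁻¹' s) ∆ s ∩ W i)) l (𝓝 0) := by
  refine tendsto_of_tendsto_of_tendsto_of_le_of_le tendsto_const_nhds (h ‖c‖ₑ (enorm_pos.2 hc))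
    (fun _ => zero_le) fun i => measure_mono fun x ⟨hxs, hxW⟩ => ?_
  simp only [Set.mem_ofPred_eq, Pi.zero_apply, edist_zero_right, Set.indicator_of_mem hxW,
    Set.enorm_indicator_comp_sub_indicator, Set.indicator_of_mem hxs, le_refl]

end MeasureTheory

theorem stmt1_general {X : Type*} [MeasurableSpace X] (μ : Measure X) [IsProbabilityMeasure μ]
    (T : X → X) (hT : MeasurePreserving T μ μ)
    (W : ℕ → Set X)
    (q : ℕ → ℕ) :
    (∀ A : Set X, MeasurableSet A →
        Tendsto (fun n => μ ((symmDiff (T^[q n] ⁻¹' A) A) ∩ W n)) atTop (nhds 0)) ↔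
      (∀ f : X → ℝ, Integrable f μ →
        TendstoInMeasure μ (fun n => (W n).indicator (fun x => f (T^[q n] x) - f x))
          atTop (0 : X → ℝ)) := by
  have hS (n : ℕ) : MeasurePreserving (T^[q n]) μ μ := hT.iterate (q n)
  refine ⟨fun hrigid f hf => ?_, fun hconv A hA => ?_⟩
  · exact tendstoInMeasure_indicator_of_tendsto_eLpNorm_restrict
      (fun n => (hf.1.comp_measurePreserving (hS n)).sub hf.1)
      (tendsto_eLpNorm_comp_sub_restrict_of_integrable hS hrigid hf)
  · exact tendsto_measure_preimage_symmDiff_inter_of_tendstoInMeasure one_ne_zero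
      (hconv _ ((integrable_const (1 : ℝ)).indicator hA))

/-- Rigidity of `q n` for `T` along `W n` is equivalent to convergence in measure of
`χ_{W n} · (f ∘ T^[q n] - f)` to `0` for every integrable `f`. -/
theorem stmt1 {X : Type*} [MeasurableSpace X] (μ : Measure X) [IsProbabilityMeasure μ]
    (T : X → X) (hT : MeasurePreserving T μ μ)
    (W : ℕ → Set X) (hW : ∀ n, MeasurableSet (W n))
    (q : ℕ → ℕ) (hq : StrictMono q) :
    (∀ A : Set X, MeasurableSet A →
        Tendsto (fun n => μ ((symmDiff (T^[q n] ⁻¹' A) A) ∩ W n)) atTop (nhds 0)) ↔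
      (∀ f : X → ℝ, Integrable f μ →
        TendstoInMeasure μ (fun n => (W n).indicator (fun x => f (T^[q n] x) - f x))
          atTop (0 : X → ℝ)) :=
  stmt1_general μ T hT W q
end

section
/- Let $(X,d)$ be a metric space with Borel $\sigma$-algebra, $\mu$ a probability measure on $X$ such that every Borel set can be inner-approximated by compact sets (e.g. $X$ is a standard Borel space), $T: X \to X$ measure-preserving, $\{W_n\}$ a sequence of measurable sets, and $\{q_n\}$ an increasing sequence of natural numbers. If $\sup_{x \in W_n} d(T^{q_n}x, x) \to 0$ as $n \to \infty$, then $\{q_n\}$ is a rigidity sequence for $T$ along $\{W_n\}$, i.e. for every measurable $A$, $\mu((T^{-q_n}A \triangle A) \cap W_n) \to 0$. -/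
open MeasureTheory Filter

/-- If `sup_{x ∈ W n} d(T^[q n] x, x) → 0`, then `{q n}` is a rigidity sequence for `T`
along `{W n}`. -/
theorem stmt2 {X : Type*} [MetricSpace X] [MeasurableSpace X] [BorelSpace X]
    (μ : Measure X) [IsProbabilityMeasure μ] [μ.InnerRegular]
    (T : X → X) (hT : MeasurePreserving T μ μ)
    (W : ℕ → Set X) (q : ℕ → ℕ) (hq : StrictMono q)
    (hsup : ∀ ε > 0, ∃ N : ℕ, ∀ n ≥ N, ∀ x ∈ W n, dist (T^[q n] x) x < ε) :
    ∀ A : Set X, MeasurableSet A →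
      Tendsto (fun n => μ ((symmDiff (T^[q n] ⁻¹' A) A) ∩ W n)) atTop (nhds 0) := by
  intro A hA
  rw [ENNReal.tendsto_nhds_zero]
  intro ε hε
  have hε4 : ε / 4 ≠ 0 := by
    simp [ENNReal.div_eq_zero_iff, hε.ne']
  obtain ⟨K1, hK1A, hK1c, hK1m⟩ := hA.exists_isCompact_diff_lt (measure_ne_top μ A) hε4
  obtain ⟨K2, hK2A, hK2c, hK2m⟩ :=
    hA.compl.exists_isCompact_diff_lt (measure_ne_top μ Aᶜ) hε4
  have hdisj : Disjoint K1 K2 := disjoint_compl_right.mono hK1A hK2A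
  obtain ⟨r, hr, hlt⟩ := EMetric.exists_pos_forall_lt_edist hK1c hK2c.isClosed hdisj
  obtain ⟨N, hN⟩ := hsup r (by exact_mod_cast hr)
  rw [eventually_atTop]
  refine ⟨N, fun n hn => ?_⟩
  set K := K1 ∪ K2 with hK
  have hKm : MeasurableSet K := (hK1c.union hK2c).measurableSet
  have hsub : symmDiff (T^[q n] ⁻¹' A) A ∩ W n ⊆ Kᶜ ∪ (T^[q n]) ⁻¹' Kᶜ := by
    intro x hx
    by_contra h
    simp only [Set.mem_union, Set.mem_preimage, Set.mem_compl_iff, not_or, not_not] at h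
    obtain ⟨hxK, hTxK⟩ := h
    have hdist : dist (T^[q n] x) x < r := hN n hn x hx.2
    rcases Set.mem_symmDiff.mp hx.1 with ⟨hTA, hxA⟩ | ⟨hxA, hTA⟩
    · -- T^[q n] x ∈ A, x ∉ A : so x ∈ K2, T^[q n] x ∈ K1
      have hx2 : x ∈ K2 := hxK.resolve_left (fun h' => hxA (hK1A h'))
      have hT1 : T^[q n] x ∈ K1 := hTxK.resolve_right (fun h' => hK2A h' hTA)
      have := hlt _ hT1 _ hx2
      exact absurd (edist_lt_coe.mpr (dist_lt_coe.mp hdist)) this.not_gt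
    · -- x ∈ A, T^[q n] x ∉ A : so x ∈ K1, T^[q n] x ∈ K2
      have hx1 : x ∈ K1 := hxK.resolve_right (fun h' => hK2A h' hxA)
      have hT2 : T^[q n] x ∈ K2 := hTxK.resolve_left (fun h' => hTA (hK1A h'))
      have := hlt _ hx1 _ hT2
      rw [edist_comm] at this
      exact absurd (edist_lt_coe.mpr (dist_lt_coe.mp hdist)) this.not_gt
  have hKc : μ Kᶜ ≤ ε / 4 + ε / 4 := by
    have hsub2 : Kᶜ ⊆ (A \ K1) ∪ (Aᶜ \ K2) := by
      intro x hx
      simp only [hK, Set.mem_compl_iff, Set.mem_union, not_or] at hx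
      by_cases hxA : x ∈ A
      · exact Or.inl ⟨hxA, hx.1⟩
      · exact Or.inr ⟨hxA, hx.2⟩
    calc μ Kᶜ ≤ μ ((A \ K1) ∪ (Aᶜ \ K2)) := measure_mono hsub2
      _ ≤ μ (A \ K1) + μ (Aᶜ \ K2) := measure_union_le _ _
      _ ≤ ε / 4 + ε / 4 := add_le_add hK1m.le hK2m.le
  calc μ (symmDiff (T^[q n] ⁻¹' A) A ∩ W n)
      ≤ μ (Kᶜ ∪ (T^[q n]) ⁻¹' Kᶜ) := measure_mono hsub
    _ ≤ μ Kᶜ + μ ((T^[q n]) ⁻¹' Kᶜ) := measure_union_le _ _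
    _ = μ Kᶜ + μ Kᶜ := by
        rw [(hT.iterate (q n)).measure_preimage hKm.compl.nullMeasurableSet]
    _ ≤ (ε / 4 + ε / 4) + (ε / 4 + ε / 4) := add_le_add hKc hKc
    _ = 4 * (ε / 4) := by ring
    _ = ε := ENNReal.mul_div_cancel' (by norm_num) (by norm_num)
end

section
/- Let $T$ be an interval exchange transformation of $[0,1)$ (more generally, a Lebesgue-measure-preserving bijection of $[0,1)$) and $f: [0,1) \to \mathbb{R}$ a function of bounded variation. Suppose $\{T^i\Delta : 0 \leq i < q\}$ is a Rokhlin tower of intervals, i.e. $\Delta \subset [0,1)$ is an interval, each $T^i\Delta$ for $0 \leq i < q$ is an interval and these intervals are pairwise disjoint, and $T$ restricted to each $T^i\Delta$ ($0 \leq i < q-1$) is a translation. Then there exists $a \in \mathbb{R}$ such that for all $x \in \bigcup_{i=0}^{q-1} T^i(\Delta \cap T^{-q}\Delta \cap T^{-2q}\Delta)$, one has $|f^{(q)}(x) - a| \leq \mathrm{Var}_{[0,1)} f$ and $|f^{(2q)}(x) - 2a| \leq 2\,\mathrm{Var}_{[0,1)} f$, where $f^{(n)}(x) = \sum_{j=0}^{n-1}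 f(T^j x)$. -/
open MeasureTheory Filter Set

/-- Birkhoff sum `f^(n)(x) = ∑_{i<n} f(T^i x)`. -/
noncomputable def birkhoff (T : ℝ → ℝ) (f : ℝ → ℝ) (n : ℕ) (x : ℝ) : ℝ :=
  ∑ i ∈ Finset.range n, f (T^[i] x)

/-!
The orbit segment of length `q` of a point `T^i y` with `y, T^q y ∈ Δ` visits every level
`T^l Δ` of the tower exactly once: at level `l` it passes through `T^l (T^q y)` if `l < i` and
through `T^l y` otherwise. Hence for two such points the Birkhoff sums `f^(q)` differ by a sum of
increments of `f` over pairs of points lying in the same level; the levels being disjoint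
intervals, these increments add up to at most `Var f`. Taking `a = f^(q)(x₀)` gives the first
bound, and the second follows from `f^(2q)(x) = f^(q)(x) + f^(q)(T^q x)`, where `T^q x` is again
such a point when `T^{2q} y ∈ Δ`.
-/

lemma Set.OrdConnected.le_of_disjoint {α : Type*} [LinearOrder α] {I J : Set α}
    (hI : I.OrdConnected) (hJ : J.OrdConnected) (hIJ : Disjoint I J) {z z' x y : α}
    (hz : z ∈ I) (hz' : z' ∈ J) (hzz' : z ≤ z') (hx : x ∈ I) (hy : y ∈ J) : x ≤ y := by
  by_contra! hyx
  rcases le_or_gt z y with hzy | hyz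
  · exact hIJ.ne_of_mem (hI.out hz hx ⟨hzy, hyx.le⟩) hy rfl
  · exact hIJ.ne_of_mem hz (hJ.out hy hz' ⟨hyz.le, hzz'⟩) rfl

section Variation

open Function

variable {α E : Type*} [LinearOrder α] [PseudoEMetricSpace E]

lemma eVariationOn.sum_le_iUnion (f : α → E) {n : ℕ} (S : Fin n → Set α)
    (hS : ∀ k l, k < l → ∀ x ∈ S k, ∀ y ∈ S l, x ≤ y) :
    ∑ k, eVariationOn f (S k) ≤ eVariationOn f (⋃ k, S k) := by
  induction n with
  | zero => simp
  | succ n ih =>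
    rw [Fin.sum_univ_succ, iUnion_fin_add_one_eq_iUnion_succ]
    calc eVariationOn f (S 0) + ∑ k : Fin n, eVariationOn f (S k.succ)
        ≤ eVariationOn f (S 0) + eVariationOn f (⋃ k : Fin n, S k.succ) := by
          gcongr
          exact ih _ fun k l hkl => hS k.succ l.succ (Fin.succ_lt_succ_iff.mpr hkl)
      _ ≤ eVariationOn f (S 0 ∪ ⋃ k : Fin n, S k.succ) := by
          refine eVariationOn.add_le_union f fun x hx y hy => ?_
          obtain ⟨k, hk⟩ := mem_iUnion.mp hy
          exact hS 0 k.succ k.succ_pos x hx y hk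

-- Sorted by the position of `z`, the disjoint intervals lie one after the other.
lemma eVariationOn.sum_edist_le_of_pairwise_disjoint (f : α → E) {s : Set α} {n : ℕ}
    (I : Fin n → Set α) (hI : ∀ k, (I k).OrdConnected) (hdisj : Pairwise (Disjoint on I))
    (hsub : ∀ k, I k ⊆ s) {z w : Fin n → α} (hz : ∀ k, z k ∈ I k) (hw : ∀ k, w k ∈ I k) :
    ∑ k, edist (f (z k)) (f (w k)) ≤ eVariationOn f s := by
  set σ := Tuple.sort z
  have hσ : Monotone (z ∘ σ) := Tuple.monotone_sort z
  calc ∑ k, edist (f (z k)) (f (w k))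
      = ∑ k, edist (f (z (σ k))) (f (w (σ k))) := (Equiv.sum_comp σ _).symm
    _ ≤ ∑ k, eVariationOn f (I (σ k)) :=
        Finset.sum_le_sum fun k _ => eVariationOn.edist_le f (hz _) (hw _)
    _ ≤ eVariationOn f (⋃ k, I (σ k)) := by
        refine eVariationOn.sum_le_iUnion f _ fun k l hkl x hx y hy => ?_
        exact (hI _).le_of_disjoint (hI _) (hdisj (σ.injective.ne hkl.ne)) (hz _) (hz _)
          (hσ hkl.le) hx hy
    _ ≤ eVariationOn f s := eVariationOn.mono f (iUnion_subset fun k => hsub _)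

end Variation

theorem birkhoffSum_iterate_eq_sum_ite {α M : Type*} [AddCommGroup M] (T : α → α) (g : α → M)
    {q i : ℕ} (hi : i ≤ q) (y : α) :
    birkhoffSum T g q (T^[i] y) =
      ∑ l ∈ Finset.range q, g (T^[l] (if l < i then T^[q] y else y)) := by
  have hlow : ∑ l ∈ Finset.range i, g (T^[l] (if l < i then T^[q] y else y)) =
      birkhoffSum T g i (T^[q] y) :=
    Finset.sum_congr rfl fun l hl => by rw [if_pos (Finset.mem_range.mp hl)]
  have hhigh : ∑ l ∈ Finset.Ico i q, g (T^[l] (if l < i then T^[q] y else y)) =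
      birkhoffSum T g q y - birkhoffSum T g i y := by
    rw [birkhoffSum, birkhoffSum, ← Finset.sum_Ico_eq_sub _ hi]
    exact Finset.sum_congr rfl fun l hl => by rw [if_neg (Finset.mem_Ico.mp hl).1.not_gt]
  have hcocycle : birkhoffSum T g i y + birkhoffSum T g q (T^[i] y) =
      birkhoffSum T g q y + birkhoffSum T g i (T^[q] y) := by
    rw [← birkhoffSum_add, ← birkhoffSum_add, add_comm]
  rw [← Finset.sum_range_add_sum_Ico _ hi, hlow, hhigh, eq_sub_of_add_eq' hcocycle]
  abel

def towerOver {α : Type*} (T : α → α) (B : Set α) (q : ℕ) : Set α :=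
  ⋃ i ∈ Finset.range q, T^[i] '' B

section Tower

variable {α : Type*} (T : α → α)

lemma towerOver_mono {B B' : Set α} (h : B ⊆ B') (q : ℕ) : towerOver T B q ⊆ towerOver T B' q :=
  biUnion_mono subset_rfl fun _ _ => image_mono h

lemma mapsTo_iterate_towerOver (D : Set α) (q : ℕ) :
    MapsTo T^[q] (towerOver T (D ∩ T^[q] ⁻¹' D ∩ T^[2 * q] ⁻¹' D) q)
      (towerOver T (D ∩ T^[q] ⁻¹' D) q) := by
  intro x hx
  simp only [towerOver, mem_iUnion, Finset.mem_range] at hx ⊢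
  obtain ⟨i, hi, y, ⟨⟨-, hqy⟩, h2qy⟩, rfl⟩ := hx
  refine ⟨i, hi, T^[q] y, ⟨hqy, ?_⟩, ?_⟩
  · rwa [mem_preimage, ← Function.iterate_add_apply, ← two_mul]
  · exact Function.Commute.iterate_iterate_self T i q y

lemma exists_birkhoffSum_eq_sum_of_mem_towerOver {M : Type*} [AddCommGroup M] (g : α → M)
    {D : Set α} {q : ℕ} {x : α} (hx : x ∈ towerOver T (D ∩ T^[q] ⁻¹' D) q) :
    ∃ z : Fin q → α, (∀ l : Fin q, z l ∈ T^[l] '' D) ∧ birkhoffSum T g q x = ∑ l, g (z l) := by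
  simp only [towerOver, mem_iUnion, Finset.mem_range] at hx
  obtain ⟨i, hi, y, ⟨hy, hqy⟩, rfl⟩ := hx
  refine ⟨fun l => T^[l] (if l < i then T^[q] y else y), fun l => ?_, ?_⟩
  · dsimp only
    split_ifs
    exacts [mem_image_of_mem _ hqy, mem_image_of_mem _ hy]
  · rw [birkhoffSum_iterate_eq_sum_ite T g hi.le, Finset.sum_range]

theorem abs_birkhoffSum_sub_le_eVariationOn [LinearOrder α] {f : α → ℝ} {s : Set α}
    (hf : BoundedVariationOn f s) {D : Set α} {q : ℕ}
    (hsub : ∀ i < q, T^[i] '' D ⊆ s) (hconn : ∀ i < q, (T^[i] '' D).OrdConnected)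
    (hdisj : ∀ i < q, ∀ j < q, i ≠ j → Disjoint (T^[i] '' D) (T^[j] '' D))
    {x x' : α} (hx : x ∈ towerOver T (D ∩ T^[q] ⁻¹' D) q)
    (hx' : x' ∈ towerOver T (D ∩ T^[q] ⁻¹' D) q) :
    |birkhoffSum T f q x - birkhoffSum T f q x'| ≤ (eVariationOn f s).toReal := by
  obtain ⟨z, hz, hzx⟩ := exists_birkhoffSum_eq_sum_of_mem_towerOver T f hx
  obtain ⟨w, hw, hwx'⟩ := exists_birkhoffSum_eq_sum_of_mem_towerOver T f hx'
  have hvar := eVariationOn.sum_edist_le_of_pairwise_disjoint f (fun l : Fin q => T^[l] '' D)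
    (fun l => hconn l l.isLt) (fun k l hkl => hdisj k k.isLt l l.isLt (Fin.val_injective.ne hkl))
    (fun l => hsub l l.isLt) hz hw
  rw [hzx, hwx', ← Finset.sum_sub_distrib]
  calc |∑ l, (f (z l) - f (w l))|
      ≤ ∑ l, |f (z l) - f (w l)| := Finset.abs_sum_le_sum_abs _ _
    _ = (∑ l, edist (f (z l)) (f (w l))).toReal := by
        simp only [ENNReal.toReal_sum fun _ _ => edist_ne_top _ _, ← dist_edist, Real.dist_eq]
    _ ≤ (eVariationOn f s).toReal := ENNReal.toReal_mono hf hvar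

end Tower

lemma exists_forall_abs_sub_le {α : Type*} {S : Set α} {g : α → ℝ} {V : ℝ}
    (h : ∀ x ∈ S, ∀ y ∈ S, |g x - g y| ≤ V) : ∃ A, ∀ x ∈ S, |g x - A| ≤ V := by
  rcases S.eq_empty_or_nonempty with rfl | ⟨x₀, hx₀⟩
  · exact ⟨0, fun x hx => hx.elim⟩
  · exact ⟨g x₀, fun x hx => h x hx x₀ hx₀⟩

theorem stmt4_general (T f : ℝ → ℝ) (hBV : BoundedVariationOn f (Set.Ico 0 1))
    (a b : ℝ) (q : ℕ)
    (hsub : ∀ i < q, T^[i] '' Set.Ico a b ⊆ Set.Ico 0 1)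
    (hintv : ∀ i < q, ∃ c d : ℝ, T^[i] '' Set.Ico a b = Set.Ico c d)
    (hdisj : ∀ i < q, ∀ j < q, i ≠ j →
      Disjoint (T^[i] '' Set.Ico a b) (T^[j] '' Set.Ico a b)) :
    ∃ A : ℝ, ∀ x ∈ ⋃ i ∈ Finset.range q,
        T^[i] '' (Set.Ico a b ∩ T^[q] ⁻¹' Set.Ico a b ∩ T^[2 * q] ⁻¹' Set.Ico a b),
      |birkhoff T f q x - A| ≤ (eVariationOn f (Set.Ico 0 1)).toReal ∧
      |birkhoff T f (2 * q) x - 2 * A| ≤ 2 * (eVariationOn f (Set.Ico 0 1)).toReal := by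
  set V := (eVariationOn f (Set.Ico 0 1)).toReal
  have hconn : ∀ i < q, (T^[i] '' Set.Ico a b).OrdConnected := fun i hi => by
    obtain ⟨c, d, hcd⟩ := hintv i hi
    exact hcd ▸ ordConnected_Ico
  obtain ⟨A, hA⟩ := exists_forall_abs_sub_le fun x hx x' hx' =>
    abs_birkhoffSum_sub_le_eVariationOn T hBV hsub hconn hdisj hx hx'
  refine ⟨A, fun x hx => ?_⟩
  have hx_close := hA x (towerOver_mono T inter_subset_left q hx)
  have hTx_close := hA _ (mapsTo_iterate_towerOver T _ q hx)
  refine ⟨hx_close, ?_⟩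
  change |birkhoffSum T f (2 * q) x - 2 * A| ≤ 2 * V
  rw [two_mul, birkhoffSum_add, two_mul, add_sub_add_comm]
  exact (abs_add_le _ _).trans (by linarith)

/-- Over a Rokhlin tower of intervals `{T^i [a,b) : 0 ≤ i < q}` on which `T` acts by
translations, the Birkhoff sums `f^(q)` and `f^(2q)` of a function of bounded variation
are within `Var f` (resp. `2 Var f`) of a constant `A` (resp. `2A`) on
`⋃_{i<q} T^i(Δ ∩ T^{-q}Δ ∩ T^{-2q}Δ)`. -/
theorem stmt4 (T f : ℝ → ℝ) (hBV : BoundedVariationOn f (Set.Ico 0 1))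
    (a b : ℝ) (q : ℕ)
    (hsub : ∀ i < q, T^[i] '' Set.Ico a b ⊆ Set.Ico 0 1)
    (hintv : ∀ i < q, ∃ c d : ℝ, T^[i] '' Set.Ico a b = Set.Ico c d)
    (hdisj : ∀ i < q, ∀ j < q, i ≠ j →
      Disjoint (T^[i] '' Set.Ico a b) (T^[j] '' Set.Ico a b))
    (htrans : ∀ i, i + 1 < q → ∃ t, ∀ x ∈ T^[i] '' Set.Ico a b, T x = x + t) :
    ∃ A : ℝ, ∀ x ∈ ⋃ i ∈ Finset.range q,
        T^[i] '' (Set.Ico a b ∩ T^[q] ⁻¹' Set.Ico a b ∩ T^[2 * q] ⁻¹' Set.Ico a b),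
      |birkhoff T f q x - A| ≤ (eVariationOn f (Set.Ico 0 1)).toReal ∧
      |birkhoff T f (2 * q) x - 2 * A| ≤ 2 * (eVariationOn f (Set.Ico 0 1)).toReal :=
  stmt4_general T f hBV a b q hsub hintv hdisj
end

section
/- Let $T: [0,1) \to [0,1)$ be a uniquely ergodic interval exchange transformation (with respect to Lebesgue measure) and $g: [0,1) \to \mathbb{R}$ absolutely continuous with $\int_0^1 Dg(t)\,dt = 0$. Let $\{T^i\Delta_n : 0 \leq i < q_n\}$ be a sequence of Rokhlin towers of intervals with $q_n \to \infty$, let $J_n = \Delta_n \cap T^{-q_n}\Delta_n \cap T^{-2q_n}\Delta_n$ and $W_n = \bigcup_{i=0}^{q_n-1} T^i J_n$. Then the functions $(g^{(q_n)} \circ T^{q_n} - g^{(q_n)}) \cdot \chi_{W_n}$ converge to $0$ uniformly as $n \to \infty$. -/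
open MeasureTheory Filter Set

/-- Birkhoff sum `g^(n)(x) = ∑_{i<n} g(T^i x)`. -/
noncomputable def birk (T : ℝ → ℝ) (g : ℝ → ℝ) (n : ℕ) (x : ℝ) : ℝ :=
  ∑ i ∈ Finset.range n, g (T^[i] x)

set_option maxHeartbeats 2000000

/-- For a uniquely ergodic IET `T` and an absolutely continuous `g` with
`∫₀¹ Dg = 0`, along a sequence of Rokhlin towers of intervals `{T^i Δ_n : i < q_n}`
with `J_n = Δ_n ∩ T^{-q_n}Δ_n ∩ T^{-2q_n}Δ_n` and `W_n = ⋃_{i<q_n} T^i J_n`, the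
functions `(g^(q_n) ∘ T^(q_n) - g^(q_n)) · χ_{W_n}` converge uniformly to `0`. -/
theorem stmt11 (T : ℝ → ℝ) (hmaps : Set.MapsTo T (Set.Ico 0 1) (Set.Ico 0 1))
    (hmp : MeasurePreserving T (volume.restrict (Set.Ico (0:ℝ) 1))
      (volume.restrict (Set.Ico (0:ℝ) 1)))
    (huniq : ∀ φ : ℝ → ℝ, ContinuousOn φ (Set.Icc 0 1) →
      TendstoUniformlyOn
        (fun (N : ℕ) x => (N : ℝ)⁻¹ * ∑ i ∈ Finset.range N, φ (T^[i] x))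
        (fun _ => ∫ t in (0:ℝ)..1, φ t) atTop (Set.Ico 0 1))
    (g Dg : ℝ → ℝ) (hDgInt : IntervalIntegrable Dg volume 0 1)
    (hg : ∀ x ∈ Set.Icc (0:ℝ) 1, g x = g 0 + ∫ t in (0:ℝ)..x, Dg t)
    (hzero : ∫ t in (0:ℝ)..1, Dg t = 0)
    (a b : ℕ → ℝ) (q : ℕ → ℕ) (hq : Tendsto q atTop atTop)
    (hsub : ∀ n, ∀ i < q n, T^[i] '' Set.Ico (a n) (b n) ⊆ Set.Ico 0 1)
    (hdisj : ∀ n, ∀ i < q n, ∀ j < q n, i ≠ j →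
      Disjoint (T^[i] '' Set.Ico (a n) (b n)) (T^[j] '' Set.Ico (a n) (b n)))
    (htrans : ∀ n, ∀ i, i + 1 < q n →
      ∃ t, ∀ x ∈ T^[i] '' Set.Ico (a n) (b n), T x = x + t)
    (J : ℕ → Set ℝ)
    (hJ : ∀ n, J n = Set.Ico (a n) (b n) ∩ T^[q n] ⁻¹' Set.Ico (a n) (b n)
      ∩ T^[2 * q n] ⁻¹' Set.Ico (a n) (b n))
    (W : ℕ → Set ℝ)
    (hWdef : ∀ n, W n = ⋃ i ∈ Finset.range (q n), T^[i] '' J n) :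
    TendstoUniformly
      (fun n => (W n).indicator
        (fun x => birk T g (q n) (T^[q n] x) - birk T g (q n) x))
      0 atTop := by
  rw [Metric.tendstoUniformly_iff]
  intro ε hε
  have hε' : 0 < ε / 100 := by positivity
  -- L¹ approximation of Dg by a continuous compactly supported ψ
  have hDg01 : IntegrableOn Dg (Set.Ioc (0:ℝ) 1) volume := hDgInt.1
  set f : ℝ → ℝ := (Set.Ioc (0:ℝ) 1).indicator Dg with hfdef
  have hfint : Integrable f volume := by
    exact (integrable_indicator_iff measurableSet_Ioc).2 hDg01
  obtain ⟨ψ, hψsupp, hψL1, hψcont, hψint⟩ :=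
    hfint.exists_hasCompactSupport_integral_sub_le hε'
  have hDgIcc : IntegrableOn Dg (Set.Icc (0:ℝ) 1) volume := by
    rw [integrableOn_Icc_iff_integrableOn_Ioc]; exact hDg01
  have habs_int : IntegrableOn (fun t => |Dg t - ψ t|) (Set.Icc (0:ℝ) 1) volume :=
    (hDgIcc.sub (hψcont.integrableOn_Icc)).abs
  -- the key error bound on subsets of [0,1]
  have herr : ∀ s : Set ℝ, MeasurableSet s → s ⊆ Set.Icc 0 1 →
      ∫ t in s, |Dg t - ψ t| ≤ ε / 100 := by
    intro s hs hs01
    have step1 : ∫ t in s, |Dg t - ψ t| ≤ ∫ t in Set.Icc (0:ℝ) 1, |Dg t - ψ t| := by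
      apply setIntegral_mono_set habs_int
      · exact Filter.Eventually.of_forall fun t => abs_nonneg _
      · exact HasSubset.Subset.eventuallyLE hs01
    have step2 : ∫ t in Set.Icc (0:ℝ) 1, |Dg t - ψ t| = ∫ t in Set.Ioc (0:ℝ) 1, |Dg t - ψ t| :=
      integral_Icc_eq_integral_Ioc
    have step3 : ∫ t in Set.Ioc (0:ℝ) 1, |Dg t - ψ t| = ∫ t in Set.Ioc (0:ℝ) 1, |f t - ψ t| := by
      apply setIntegral_congr_fun measurableSet_Ioc
      intro t ht
      simp [hfdef, Set.indicator_of_mem ht]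
    have step4 : ∫ t in Set.Ioc (0:ℝ) 1, |f t - ψ t| ≤ ∫ t, |f t - ψ t| := by
      apply setIntegral_le_integral ((hfint.sub hψint).abs)
      exact Filter.Eventually.of_forall fun t => abs_nonneg _
    have step5 : ∫ t, |f t - ψ t| ≤ ε / 100 := by
      simpa [Real.norm_eq_abs] using hψL1
    linarith
  -- |c| is small
  set c : ℝ := ∫ t in (0:ℝ)..1, ψ t with hcdef
  have hc : |c| ≤ ε / 100 := by
    have hψ01 : IntervalIntegrable ψ volume 0 1 := hψcont.intervalIntegrable 0 1
    have e1 : c = ∫ t in (0:ℝ)..1, (ψ t - Dg t) := by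
      rw [intervalIntegral.integral_sub hψ01 hDgInt, hzero, sub_zero]
    rw [e1]
    have e2 := intervalIntegral.norm_integral_le_integral_norm_uIoc
      (f := fun t => ψ t - Dg t) (a := (0:ℝ)) (b := 1) (μ := volume)
    rw [Real.norm_eq_abs] at e2
    refine e2.trans ?_
    rw [Set.uIoc_of_le (zero_le_one)]
    have : ∫ t in Set.Ioc (0:ℝ) 1, ‖ψ t - Dg t‖ = ∫ t in Set.Ioc (0:ℝ) 1, |Dg t - ψ t| := by
      apply setIntegral_congr_fun measurableSet_Ioc
      intro t ht
      simp only [Real.norm_eq_abs]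
      rw [abs_sub_comm]
    rw [this]
    exact herr _ measurableSet_Ioc Set.Ioc_subset_Icc_self
  -- unique ergodicity for ψ
  have h1 := huniq ψ hψcont.continuousOn
  rw [Metric.tendstoUniformlyOn_iff] at h1
  obtain ⟨N₀, hN₀⟩ := Filter.eventually_atTop.mp (h1 (ε/100) hε')
  obtain ⟨B, hB⟩ := hψcont.bounded_above_of_compact_support hψsupp
  have hB0 : (0:ℝ) ≤ B := le_trans (norm_nonneg _) (hB 0)
  -- uniform Birkhoff sum bound for ψ
  have hbirk : ∀ N : ℕ, ∀ x ∈ Set.Ico (0:ℝ) 1,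
      |∑ i ∈ Finset.range N, ψ (T^[i] x)| ≤ N₀ * B + N * (ε/100 + ε/100) := by
    intro N x hx
    rcases lt_or_ge N N₀ with h | h
    · have b1 : |∑ i ∈ Finset.range N, ψ (T^[i] x)| ≤ ∑ i ∈ Finset.range N, |ψ (T^[i] x)| :=
        Finset.abs_sum_le_sum_abs _ _
      have b2 : ∑ i ∈ Finset.range N, |ψ (T^[i] x)| ≤ ∑ i ∈ Finset.range N, B :=
        Finset.sum_le_sum fun i _ => by simpa [Real.norm_eq_abs] using hB (T^[i] x)
      simp only [Finset.sum_const, Finset.card_range, nsmul_eq_mul] at b2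
      have : (N:ℝ) * B ≤ (N₀:ℝ) * B := by
        apply mul_le_mul_of_nonneg_right _ hB0
        exact_mod_cast h.le
      have hN0 : (0:ℝ) ≤ (N:ℝ) * (ε/100 + ε/100) := by positivity
      linarith
    · have hd := hN₀ N h x hx
      rw [Real.dist_eq] at hd
      rcases Nat.eq_zero_or_pos N with h0 | h0
      · subst h0; simp; positivity
      · have hNne : (N:ℝ) ≠ 0 := by exact_mod_cast h0.ne'
        have e1 : |(N:ℝ)⁻¹ * ∑ i ∈ Finset.range N, ψ (T^[i] x)| ≤ ε/100 + ε/100 := by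
          have : |(N:ℝ)⁻¹ * ∑ i ∈ Finset.range N, ψ (T^[i] x)|
              ≤ |c| + |c - (N:ℝ)⁻¹ * ∑ i ∈ Finset.range N, ψ (T^[i] x)| := by
            have := abs_sub_abs_le_abs_sub ((N:ℝ)⁻¹ * ∑ i ∈ Finset.range N, ψ (T^[i] x)) c
            have h2 : |(N:ℝ)⁻¹ * ∑ i ∈ Finset.range N, ψ (T^[i] x) - c|
                = |c - (N:ℝ)⁻¹ * ∑ i ∈ Finset.range N, ψ (T^[i] x)| := abs_sub_comm _ _
            linarith [abs_nonneg c]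
          linarith
        have e2 : |∑ i ∈ Finset.range N, ψ (T^[i] x)|
            = (N:ℝ) * |(N:ℝ)⁻¹ * ∑ i ∈ Finset.range N, ψ (T^[i] x)| := by
          rw [abs_mul, abs_inv, abs_of_nonneg (α := ℝ) (Nat.cast_nonneg N)]
          field_simp
        rw [e2]
        have : (N:ℝ) * |(N:ℝ)⁻¹ * ∑ i ∈ Finset.range N, ψ (T^[i] x)|
            ≤ (N:ℝ) * (ε/100 + ε/100) := by
          apply mul_le_mul_of_nonneg_left e1 (Nat.cast_nonneg N)
        have hN0B : (0:ℝ) ≤ (N₀:ℝ) * B := by positivity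
        linarith
  set Q : ℝ := N₀ * B + 1 with hQdef -- dummy
  set K : ℕ := max 1 (⌈8 * (N₀ * B) / ε⌉₊ + 1) with hKdef
  filter_upwards [hq.eventually_ge_atTop K] with n hn
  intro x
  by_cases hx : x ∈ W n
  swap
  · simpa [Set.indicator_of_notMem hx] using hε
  rw [Set.indicator_of_mem hx]
  set p : ℕ := q n with hpdef
  have hK1 : 1 ≤ K := le_max_left _ _
  have hp1 : 1 ≤ p := le_trans hK1 hn
  -- translation constants
  have trans : ∀ k : ℕ, ∃ C : ℝ, k < p → ∀ u ∈ Set.Ico (a n) (b n), T^[k] u = u + C := by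
    intro k
    induction k with
    | zero => exact ⟨0, fun _ u _ => by simp⟩
    | succ k ih =>
      obtain ⟨C, hC⟩ := ih
      by_cases hk : k + 1 < p
      · obtain ⟨t, ht⟩ := htrans n k hk
        refine ⟨C + t, fun _ u hu => ?_⟩
        rw [Function.iterate_succ_apply', ht _ ⟨u, hu, rfl⟩, hC (by omega) u hu, add_assoc]
      · exact ⟨0, fun h => absurd h hk⟩
  choose C hC using trans
  have hlev : ∀ k, k < p →
      T^[k] '' Set.Ico (a n) (b n) = Set.Ico (a n + C k) (b n + C k) := by
    intro k hk
    rw [Set.image_congr (fun u hu => hC k hk u hu), Set.image_add_const_Ico]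
  -- extract the tower coordinates of x
  rw [hWdef n] at hx
  simp only [Set.mem_iUnion] at hx
  obtain ⟨j, hjmem, y, hyJ, hxy⟩ := hx
  have hj : j < p := Finset.mem_range.mp hjmem
  rw [hJ n] at hyJ
  have hy0 : y ∈ Set.Ico (a n) (b n) := hyJ.1.1
  have hy1 : T^[p] y ∈ Set.Ico (a n) (b n) := hyJ.1.2
  set y1 : ℝ := T^[p] y with hy1def
  set y2 : ℝ := T^[p] y1 with hy2def
  have hy2 : y2 ∈ Set.Ico (a n) (b n) := by
    have : y2 = T^[2 * p] y := by
      rw [hy2def, hy1def, two_mul, Function.iterate_add_apply]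
    rw [this]
    exact hyJ.2
  have hab : a n < b n := lt_of_le_of_lt hy0.1 hy0.2
  -- length bound
  have hlen : b n - a n ≤ 1 / p := by
    have hmeas : ∀ k ∈ Finset.range p, MeasurableSet (T^[k] '' Set.Ico (a n) (b n)) := by
      intro k hk
      rw [hlev k (Finset.mem_range.mp hk)]
      exact measurableSet_Ico
    have hpd : (↑(Finset.range p) : Set ℕ).PairwiseDisjoint
        (fun k => T^[k] '' Set.Ico (a n) (b n)) := by
      intro i hi k hk hik
      exact hdisj n i (Finset.mem_range.mp (Finset.mem_coe.mp hi)) k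
        (Finset.mem_range.mp (Finset.mem_coe.mp hk)) hik
    have hsum := measure_biUnion_finset (μ := volume) hpd hmeas
    have hvol : ∀ k ∈ Finset.range p,
        volume (T^[k] '' Set.Ico (a n) (b n)) = ENNReal.ofReal (b n - a n) := by
      intro k hk
      rw [hlev k (Finset.mem_range.mp hk), Real.volume_Ico]
      congr 1
      ring
    rw [Finset.sum_congr rfl hvol, Finset.sum_const, Finset.card_range] at hsum
    have hsub1 : (⋃ k ∈ Finset.range p, T^[k] '' Set.Ico (a n) (b n)) ⊆ Set.Ico (0:ℝ) 1 :=
      Set.iUnion₂_subset fun k hk => hsub n k (Finset.mem_range.mp hk)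
    have hle1 : (p : ENNReal) * ENNReal.ofReal (b n - a n) ≤ 1 := by
      calc (p : ENNReal) * ENNReal.ofReal (b n - a n)
          = p • ENNReal.ofReal (b n - a n) := by rw [nsmul_eq_mul]
        _ = volume (⋃ k ∈ Finset.range p, T^[k] '' Set.Ico (a n) (b n)) := hsum.symm
        _ ≤ volume (Set.Ico (0:ℝ) 1) := measure_mono hsub1
        _ = 1 := by rw [Real.volume_Ico]; norm_num
    have hp0 : (0:ℝ) < p := by exact_mod_cast hp1
    rw [← ENNReal.ofReal_natCast, ← ENNReal.ofReal_mul (by positivity), ← ENNReal.ofReal_one]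
      at hle1
    have := (ENNReal.ofReal_le_ofReal_iff zero_le_one).mp hle1
    rw [le_div_iff₀ hp0]
    linarith
  -- splitting identity
  have hsplit : birk T g p (T^[p] x) - birk T g p x
      = (∑ k ∈ Finset.Ico j p, (g (T^[k] y1) - g (T^[k] y))) +
        (∑ k ∈ Finset.range j, (g (T^[k] y2) - g (T^[k] y1))) := by
    have stepA : birk T g p (T^[p] x) - birk T g p x
        = ∑ i ∈ Finset.range p, (g (T^[j + i] y1) - g (T^[j + i] y)) := by
      simp only [birk]
      rw [← Finset.sum_sub_distrib]
      apply Finset.sum_congr rfl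
      intro i _
      have a1 : T^[i] (T^[p] x) = T^[j + i] y1 := by
        rw [← hxy, hy1def]
        simp only [← Function.iterate_add_apply]
        congr 1
        omega
      have a2 : T^[i] x = T^[j + i] y := by
        rw [← hxy, ← Function.iterate_add_apply]
        congr 1
        omega
      rw [a1, a2]
    have stepB : ∑ k ∈ Finset.Ico j (j + p), (g (T^[k] y1) - g (T^[k] y))
        = ∑ i ∈ Finset.range p, (g (T^[j + i] y1) - g (T^[j + i] y)) := by
      rw [Finset.sum_Ico_eq_sum_range]
      have hjp : j + p - j = p := by omega
      rw [hjp]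
    have stepC := Finset.sum_Ico_consecutive (fun k => g (T^[k] y1) - g (T^[k] y))
      hj.le (Nat.le_add_left p j)
    have stepD : ∑ k ∈ Finset.Ico p (j + p), (g (T^[k] y1) - g (T^[k] y))
        = ∑ i ∈ Finset.range j, (g (T^[i] y2) - g (T^[i] y1)) := by
      rw [Finset.sum_Ico_eq_sum_range]
      have hjp : j + p - p = j := by omega
      rw [hjp]
      apply Finset.sum_congr rfl
      intro i _
      have a1 : T^[i] y2 = T^[p + i] y1 := by
        rw [hy2def, ← Function.iterate_add_apply]
        congr 1
        omega
      have a2 : T^[i] y1 = T^[p + i] y := by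
        rw [hy1def, ← Function.iterate_add_apply]
        congr 1
        omega
      rw [a1, a2]
    rw [stepA, ← stepD, stepC, stepB]
  -- main estimate for a window of levels
  set Q2 : ℝ := N₀ * B + p * (ε/100 + ε/100) with hQ2def
  have hQ2pos : 0 ≤ Q2 := by rw [hQ2def]; positivity
  have main : ∀ u v : ℝ, u ∈ Set.Ico (a n) (b n) → v ∈ Set.Ico (a n) (b n) →
      ∀ l m : ℕ, l ≤ m → m ≤ p →
      |∑ k ∈ Finset.Ico l m, (g (T^[k] v) - g (T^[k] u))| ≤
        ε/100 + (b n - a n) * (Q2 + Q2) := by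
    intro u v hu hv l m hlm hmp'
    have hmem : ∀ w ∈ Set.Ico (a n) (b n), ∀ k, k < p → T^[k] w ∈ Set.Icc (0:ℝ) 1 :=
      fun w hw k hk => Set.Ico_subset_Icc_self (hsub n k hk ⟨w, hw, rfl⟩)
    have hDgw : ∀ w ∈ Set.Icc (0:ℝ) 1, IntervalIntegrable Dg volume 0 w := by
      intro w hw
      apply hDgInt.mono_set
      rw [Set.uIcc_of_le hw.1, Set.uIcc_of_le zero_le_one]
      exact Set.Icc_subset_Icc le_rfl hw.2
    have hklt : ∀ k ∈ Finset.Ico l m, k < p :=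
      fun k hk => lt_of_lt_of_le (Finset.mem_Ico.mp hk).2 hmp'
    have hTuv : ∀ k, k < p → IntervalIntegrable Dg volume (T^[k] u) (T^[k] v) := by
      intro k hk
      have h1 := hmem u hu k hk
      have h2 := hmem v hv k hk
      apply hDgInt.mono_set
      apply Set.uIcc_subset_uIcc <;> rw [Set.uIcc_of_le zero_le_one] <;> assumption
    have step1 : ∀ k ∈ Finset.Ico l m, g (T^[k] v) - g (T^[k] u)
        = (∫ t in (T^[k] u)..(T^[k] v), (Dg t - ψ t)) + ∫ t in (T^[k] u)..(T^[k] v), ψ t := by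
      intro k hk
      have hk' := hklt k hk
      have h1 := hmem u hu k hk'
      have h2 := hmem v hv k hk'
      have e1 : g (T^[k] v) - g (T^[k] u) = ∫ t in (T^[k] u)..(T^[k] v), Dg t := by
        rw [hg _ h2, hg _ h1]
        have e := intervalIntegral.integral_interval_sub_left (hDgw _ h2) (hDgw _ h1)
        linarith
      rw [e1, ← intervalIntegral.integral_add
        ((hTuv k hk').sub (hψcont.intervalIntegrable _ _)) (hψcont.intervalIntegrable _ _)]
      simp
    rw [Finset.sum_congr rfl step1, Finset.sum_add_distrib]
    have hA : |∑ k ∈ Finset.Ico l m, ∫ t in (T^[k] u)..(T^[k] v), (Dg t - ψ t)| ≤ ε/100 := by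
      set E : ℕ → Set ℝ := fun k => Set.uIoc (T^[k] u) (T^[k] v) with hEdef
      have hEsub : ∀ k, k < p → E k ⊆ T^[k] '' Set.Ico (a n) (b n) := by
        intro k hk
        rw [hlev k hk, hEdef]
        simp only
        rw [hC k hk u hu, hC k hk v hv]
        intro t ht
        rw [Set.uIoc] at ht
        constructor
        · have h5 : a n + C k ≤ (u + C k) ⊓ (v + C k) :=
            le_min (by linarith [hu.1]) (by linarith [hv.1])
          exact le_of_lt (lt_of_le_of_lt h5 ht.1)
        · have h5 : (u + C k) ⊔ (v + C k) < b n + C k :=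
            max_lt (by linarith [hu.2]) (by linarith [hv.2])
          exact lt_of_le_of_lt ht.2 h5
      have hEsub01 : ∀ k, k < p → E k ⊆ Set.Icc (0:ℝ) 1 :=
        fun k hk => (hEsub k hk).trans ((hsub n k hk).trans Set.Ico_subset_Icc_self)
      have hint : ∀ k ∈ Finset.Ico l m, IntegrableOn (fun t => |Dg t - ψ t|) (E k) volume :=
        fun k hk => habs_int.mono_set (hEsub01 k (hklt k hk))
      have hdisjE : (↑(Finset.Ico l m) : Set ℕ).Pairwise (Function.onFun Disjoint E) := by
        intro i hi k hk hik
        exact Disjoint.mono (hEsub i (hklt i (Finset.mem_coe.mp hi)))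
          (hEsub k (hklt k (Finset.mem_coe.mp hk)))
          (hdisj n i (hklt i (Finset.mem_coe.mp hi)) k (hklt k (Finset.mem_coe.mp hk)) hik)
      have hunion := integral_biUnion_finset (μ := volume) (f := fun t => |Dg t - ψ t|)
        (Finset.Ico l m) (fun k _ => measurableSet_uIoc) hdisjE hint
      have e2 : ∀ k ∈ Finset.Ico l m,
          |∫ t in (T^[k] u)..(T^[k] v), (Dg t - ψ t)| ≤ ∫ t in E k, |Dg t - ψ t| := by
        intro k hk
        have h6 := intervalIntegral.norm_integral_le_integral_norm_uIoc
          (f := fun t => Dg t - ψ t) (a := T^[k] u) (b := T^[k] v) (μ := volume)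
        simpa [Real.norm_eq_abs] using h6
      calc |∑ k ∈ Finset.Ico l m, ∫ t in (T^[k] u)..(T^[k] v), (Dg t - ψ t)|
          ≤ ∑ k ∈ Finset.Ico l m, |∫ t in (T^[k] u)..(T^[k] v), (Dg t - ψ t)| :=
            Finset.abs_sum_le_sum_abs _ _
        _ ≤ ∑ k ∈ Finset.Ico l m, ∫ t in E k, |Dg t - ψ t| := Finset.sum_le_sum e2
        _ = ∫ t in ⋃ k ∈ Finset.Ico l m, E k, |Dg t - ψ t| := hunion.symm
        _ ≤ ε/100 := herr _ (Finset.measurableSet_biUnion _ (fun k _ => measurableSet_uIoc))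
            (Set.iUnion₂_subset fun k hk => hEsub01 k (hklt k hk))
    have hBnd : |∑ k ∈ Finset.Ico l m, ∫ t in (T^[k] u)..(T^[k] v), ψ t|
        ≤ (Q2 + Q2) * |v - u| := by
      have e3 : ∀ k ∈ Finset.Ico l m, (∫ t in (T^[k] u)..(T^[k] v), ψ t)
          = ∫ t in u..v, ψ (t + C k) := by
        intro k hk
        have hk' := hklt k hk
        rw [hC k hk' u hu, hC k hk' v hv, ← intervalIntegral.integral_comp_add_right]
      rw [Finset.sum_congr rfl e3, ← intervalIntegral.integral_finset_sum]
      swap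
      · intro k hk
        exact (hψcont.comp (continuous_add_right (C k))).intervalIntegrable _ _
      have hbound : ∀ t ∈ Set.uIoc u v, ‖∑ k ∈ Finset.Ico l m, ψ (t + C k)‖ ≤ Q2 + Q2 := by
        intro t ht
        have htab : t ∈ Set.Ico (a n) (b n) := by
          rw [Set.uIoc] at ht
          constructor
          · exact le_of_lt (lt_of_le_of_lt (le_min hu.1 hv.1) ht.1)
          · exact lt_of_le_of_lt ht.2 (max_lt hu.2 hv.2)
        have ht01 : t ∈ Set.Ico (0:ℝ) 1 := by
          have h7 := hsub n 0 (by omega)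
          simpa using h7 ⟨t, htab, rfl⟩
        have e4 : ∑ k ∈ Finset.Ico l m, ψ (t + C k)
            = (∑ i ∈ Finset.range m, ψ (T^[i] t)) - (∑ i ∈ Finset.range l, ψ (T^[i] t)) := by
          rw [← Finset.sum_Ico_eq_sub _ hlm]
          apply Finset.sum_congr rfl
          intro k hk
          rw [← hC k (hklt k hk) t htab]
        rw [Real.norm_eq_abs, e4]
        have b1 := hbirk m t ht01
        have b2 := hbirk l t ht01
        have hm2 : (m:ℝ) * (ε/100 + ε/100) ≤ (p:ℝ) * (ε/100 + ε/100) :=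
          mul_le_mul_of_nonneg_right (by exact_mod_cast hmp') (by positivity)
        have hl2 : (l:ℝ) * (ε/100 + ε/100) ≤ (p:ℝ) * (ε/100 + ε/100) :=
          mul_le_mul_of_nonneg_right (by exact_mod_cast (hlm.trans hmp')) (by positivity)
        have htri : |(∑ i ∈ Finset.range m, ψ (T^[i] t)) - (∑ i ∈ Finset.range l, ψ (T^[i] t))|
            ≤ |∑ i ∈ Finset.range m, ψ (T^[i] t)| + |∑ i ∈ Finset.range l, ψ (T^[i] t)| := by
          rw [sub_eq_add_neg]
          exact (abs_add_le _ _).trans (by rw [abs_neg])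
        rw [hQ2def]
        linarith
      have h8 := intervalIntegral.norm_integral_le_of_norm_le_const hbound
      rw [Real.norm_eq_abs] at h8
      exact h8
    have hvu : |v - u| ≤ b n - a n := by
      rw [abs_sub_le_iff]
      constructor <;> linarith [hu.1, hu.2, hv.1, hv.2]
    have htri2 := abs_add_le (∑ k ∈ Finset.Ico l m, ∫ t in (T^[k] u)..(T^[k] v), (Dg t - ψ t))
      (∑ k ∈ Finset.Ico l m, ∫ t in (T^[k] u)..(T^[k] v), ψ t)
    have hmul : (Q2 + Q2) * |v - u| ≤ (b n - a n) * (Q2 + Q2) := by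
      rw [mul_comm (b n - a n)]
      exact mul_le_mul_of_nonneg_left hvu (by linarith)
    refine htri2.trans ?_
    exact add_le_add hA (hBnd.trans hmul)
  -- assembly
  have m1 := main y y1 hy0 hy1 j p hj.le le_rfl
  have m2 := main y1 y2 hy1 hy2 0 j (Nat.zero_le _) hj.le
  rw [← Finset.range_eq_Ico] at m2
  have habs : |birk T g p (T^[p] x) - birk T g p x| ≤ 2 * (ε/100) + 2 * ((b n - a n) * (Q2 + Q2)) := by
    rw [hsplit]
    have := abs_add_le (∑ k ∈ Finset.Ico j p, (g (T^[k] y1) - g (T^[k] y)))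
      (∑ k ∈ Finset.range j, (g (T^[k] y2) - g (T^[k] y1)))
    linarith
  have hfinal : (b n - a n) * (Q2 + Q2) ≤ 2 * (N₀ * B) / p + 2 * (ε/100 + ε/100) := by
    have hp0 : (0:ℝ) < p := by exact_mod_cast hp1
    have h1 : (b n - a n) * (Q2 + Q2) ≤ (1 / p) * (Q2 + Q2) := by
      apply mul_le_mul_of_nonneg_right hlen (by linarith)
    have h2 : (1 / p) * (Q2 + Q2) = 2 * (N₀ * B) / p + 2 * (ε/100 + ε/100) * (p / p) := by
      rw [hQ2def]; field_simp; ring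
    rw [div_self hp0.ne', mul_one] at h2
    linarith
  have hKbound : 4 * (N₀ * B) / p ≤ ε / 2 := by
    have hp0 : (0:ℝ) < p := by exact_mod_cast hp1
    rw [div_le_iff₀ hp0]
    have hKceil : (⌈8 * (N₀ * B) / ε⌉₊ : ℝ) + 1 ≤ (K:ℝ) := by
      have : (⌈8 * (N₀ * B) / ε⌉₊ + 1 : ℕ) ≤ K := le_max_right _ _
      exact_mod_cast this
    have h8 : 8 * (N₀ * B) / ε ≤ (K:ℝ) := le_trans (le_trans (Nat.le_ceil _) (by linarith)) hKceil
    have hKp : (K:ℝ) ≤ (p:ℝ) := by exact_mod_cast hn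
    have : 8 * (N₀ * B) ≤ ε * p := by
      have := (div_le_iff₀ hε).mp (h8.trans hKp)
      linarith
    linarith
  rw [Real.dist_eq]
  have : |(0:ℝ → ℝ) x - (birk T g p (T^[p] x) - birk T g p x)| = |birk T g p (T^[p] x) - birk T g p x| := by
    simp [abs_sub_comm]
  rw [this]
  calc |birk T g p (T^[p] x) - birk T g p x|
      ≤ 2 * (ε/100) + 2 * ((b n - a n) * (Q2 + Q2)) := habs
    _ ≤ 2 * (ε/100) + 2 * (2 * (N₀ * B) / p + 2 * (ε/100 + ε/100)) := by linarith
    _ < ε := by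
        have : 2 * (2 * (N₀ * B) / p) = 4 * (N₀ * B) / p := by ring
        linarith [hKbound]
end

section
/- Let $T$ be an ergodic automorphism of a probability space $(X,\mathcal{B},\mu)$ and $\{W_n\}$ a sequence of Rokhlin towers, $W_n = \bigcup_{i=0}^{q_n-1} T^i J_n$ with the sets $T^i J_n$, $0 \leq i < q_n$, pairwise disjoint. Suppose $\liminf_n \mu(W_n) > 0$ and $\mu(J_n) \to 0$. Then for $\mu$-almost every $x \in X$, $x \in W_n$ for infinitely many $n$. -/
/-! Fix `N` and put `S = ⋃ n ≥ N, W n`. A point in one of the lowest `q n - m` levels of the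
tower `W n` stays in `W n ⊆ S` for its first `m` iterates, and these levels fill `W n` up to
measure `m * μ (J n) → 0` (each level `T^[i] '' J n` has measure `μ (J n)` since `T` is injective). Hence the points whose whole forward orbit stays in `S` have measure
at least `liminf μ (W n) > 0`; this set is forward invariant, so by ergodicity it is conull, and
therefore so is `S`. -/

open MeasureTheory Filter Set
open scoped ENNReal

theorem mapsTo_iterate_biUnion_range_sub {α : Type*} (T : α → α) (J : Set α) {q m j : ℕ}
    (hj : j ≤ m) :
    MapsTo T^[j] (⋃ i ∈ Finset.range (q - m), T^[i] '' J) (⋃ i ∈ Finset.range q, T^[i] '' J) := by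
  simp only [MapsTo, mem_iUnion, Finset.mem_range, exists_prop, mem_image]
  rintro _ ⟨i, hi, y, hy, rfl⟩
  exact ⟨j + i, by omega, y, hy, Function.iterate_add_apply T j i y⟩

section

variable {α β : Type*} [MeasurableSpace α] [MeasurableSpace β] {μ : Measure α}

theorem MeasureTheory.MeasurePreserving.measure_image_of_injective {ν : Measure β} {f : α → β}
    (hf : MeasurePreserving f μ ν) (hinj : Function.Injective f) {s : Set α}
    (hs : MeasurableSet (f '' s)) : ν (f '' s) = μ s := by
  rw [← hf.measure_preimage hs.nullMeasurableSet, preimage_image_eq s hinj]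

theorem measure_biUnion_range_le_sub_add (μ : Measure α) {A : ℕ → Set α} {a : ℝ≥0∞}
    (hA : ∀ i, μ (A i) ≤ a) (q m : ℕ) :
    μ (⋃ i ∈ Finset.range q, A i) ≤ μ (⋃ i ∈ Finset.range (q - m), A i) + m * a := by
  have hsplit : ⋃ i ∈ Finset.range q, A i ⊆
      (⋃ i ∈ Finset.range (q - m), A i) ∪ ⋃ i ∈ Finset.range m, A (q - m + i) := by
    simp only [subset_def, mem_union, mem_iUnion, Finset.mem_range, exists_prop]
    rintro x ⟨i, hi, hx⟩
    by_cases hlow : i < q - m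
    · exact .inl ⟨i, hlow, hx⟩
    · exact .inr ⟨i - (q - m), by omega, by rwa [Nat.add_sub_cancel' (by omega)]⟩
  calc μ (⋃ i ∈ Finset.range q, A i)
      ≤ μ (⋃ i ∈ Finset.range (q - m), A i) + μ (⋃ i ∈ Finset.range m, A (q - m + i)) :=
        (measure_mono hsplit).trans (measure_union_le _ _)
    _ ≤ μ (⋃ i ∈ Finset.range (q - m), A i) + ∑ i ∈ Finset.range m, μ (A (q - m + i)) := by
        gcongr; exact measure_biUnion_finset_le _ _
    _ ≤ μ (⋃ i ∈ Finset.range (q - m), A i) + m * a := by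
        gcongr
        simpa using Finset.sum_le_card_nsmul (Finset.range m) _ _ fun i _ => hA (q - m + i)

variable {T : α → α}

theorem measure_biUnion_range_image_iterate_le (hT : MeasurePreserving T μ μ)
    (hinj : Function.Injective T) {J : Set α} (hlevels : ∀ i, MeasurableSet (T^[i] '' J))
    {S : Set α} {q : ℕ} (hS : ⋃ i ∈ Finset.range q, T^[i] '' J ⊆ S) (m : ℕ) :
    μ (⋃ i ∈ Finset.range q, T^[i] '' J) ≤ μ (⋂ j ≤ m, T^[j] ⁻¹' S) + m * μ J := by
  have hlevel i : μ (T^[i] '' J) ≤ μ J :=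
    ((hT.iterate i).measure_image_of_injective (hinj.iterate i) (hlevels i)).le
  refine (measure_biUnion_range_le_sub_add μ hlevel q m).trans ?_
  gcongr
  exact subset_iInter₂ fun j hj =>
    ((mapsTo_iterate_biUnion_range_sub T J hj).mono_right hS).subset_preimage

theorem liminf_measure_le_measure_iInter_preimage_iterate [IsFiniteMeasure μ]
    (hT : MeasurePreserving T μ μ) (hinj : Function.Injective T) {q : ℕ → ℕ} {J W : ℕ → Set α}
    (hlevels : ∀ n i, MeasurableSet (T^[i] '' J n))
    (hW : ∀ n, W n = ⋃ i ∈ Finset.range (q n), T^[i] '' J n)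
    (hJ0 : Tendsto (fun n => μ (J n)) atTop (nhds 0)) {S : Set α} (hS : NullMeasurableSet S μ)
    (hWS : ∀ᶠ n in atTop, W n ⊆ S) :
    atTop.liminf (fun n => μ (W n)) ≤ μ (⋂ j, T^[j] ⁻¹' S) := by
  rw [measure_iInter_eq_iInf_measure_iInter_le
    (fun j => hS.preimage (hT.iterate j).quasiMeasurePreserving) ⟨0, measure_ne_top μ _⟩]
  refine le_iInf fun m => ?_
  have hlim : Tendsto (fun n => μ (⋂ j ≤ m, T^[j] ⁻¹' S) + m * μ (J n)) atTop
      (nhds (μ (⋂ j ≤ m, T^[j] ⁻¹' S))) := by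
    simpa using tendsto_const_nhds.add
      (ENNReal.Tendsto.const_mul hJ0 (.inr (ENNReal.natCast_ne_top m)))
  calc atTop.liminf (fun n => μ (W n))
      ≤ atTop.liminf (fun n => μ (⋂ j ≤ m, T^[j] ⁻¹' S) + m * μ (J n)) :=
        liminf_le_liminf <| hWS.mono fun n hn =>
          hW n ▸ measure_biUnion_range_image_iterate_le hT hinj (hlevels n) (hW n ▸ hn) m
    _ = μ (⋂ j ≤ m, T^[j] ⁻¹' S) := hlim.liminf_eq

theorem Ergodic.ae_mem_of_measure_iInter_preimage_iterate_ne_zero [IsFiniteMeasure μ]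
    (hT : Ergodic T μ) {S : Set α} (hS : NullMeasurableSet S μ)
    (h : μ (⋂ j, T^[j] ⁻¹' S) ≠ 0) : ∀ᵐ x ∂μ, x ∈ S := by
  set D := ⋂ j, T^[j] ⁻¹' S
  have hD : NullMeasurableSet D μ :=
    .iInter fun j => hS.preimage (hT.toMeasurePreserving.iterate j).quasiMeasurePreserving
  have hDinv : D ⊆ T ⁻¹' D := fun x hx => mem_iInter.2 fun j => by
    simpa only [mem_preimage, ← Function.iterate_succ_apply] using mem_iInter.1 hx (j + 1)
  rcases hT.ae_empty_or_univ_of_ae_le_preimage hD hDinv.eventuallyLE with hempty | huniv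
  · exact absurd (measure_congr hempty) (by simpa using h)
  · filter_upwards [huniv.mem_iff] with x hx
    exact mem_iInter.1 (hx.2 trivial) 0

end

theorem stmt14_general {X : Type*} [MeasurableSpace X] (μ : Measure X) [IsProbabilityMeasure μ]
    (T : X → X) (hbij : Function.Bijective T)
    (hErg : Ergodic T μ)
    (q : ℕ → ℕ) (J : ℕ → Set X)
    (hlevels : ∀ n i, MeasurableSet (T^[i] '' J n))
    (W : ℕ → Set X) (hW : ∀ n, W n = ⋃ i ∈ Finset.range (q n), T^[i] '' J n)
    (hpos : 0 < atTop.liminf (fun n => μ (W n)))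
    (hJ0 : Tendsto (fun n => μ (J n)) atTop (nhds 0)) :
    ∀ᵐ x ∂μ, ∃ᶠ n in atTop, x ∈ W n := by
  have hWmeas n : MeasurableSet (W n) :=
    hW n ▸ Finset.measurableSet_biUnion _ fun i _ => hlevels n i
  have htail N : ∀ᵐ x ∂μ, x ∈ ⋃ n ≥ N, W n := by
    have hS : NullMeasurableSet (⋃ n ≥ N, W n) μ :=
      (MeasurableSet.biUnion (to_countable _) fun n _ => hWmeas n).nullMeasurableSet
    refine hErg.ae_mem_of_measure_iInter_preimage_iterate_ne_zero hS (hpos.trans_le ?_).ne'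
    exact liminf_measure_le_measure_iInter_preimage_iterate hErg.toMeasurePreserving
      hbij.injective hlevels hW hJ0 hS
      ((eventually_ge_atTop N).mono fun n hn => subset_biUnion_of_mem (u := W) hn)
  filter_upwards [ae_all_iff.2 htail] with x hx
  exact frequently_atTop.2 fun N => by simpa using hx N

/-- If `W n` are Rokhlin towers over bases `J n` with `liminf μ(W n) > 0` and
`μ(J n) → 0`, then almost every point belongs to `W n` for infinitely many `n`. -/
theorem stmt14 {X : Type*} [MeasurableSpace X] (μ : Measure X) [IsProbabilityMeasure μ]
    (T : X → X) (hT : MeasurePreserving T μ μ) (hbij : Function.Bijective T)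
    (hErg : Ergodic T μ)
    (q : ℕ → ℕ) (J : ℕ → Set X) (hJmeas : ∀ n, MeasurableSet (J n))
    (hlevels : ∀ n i, MeasurableSet (T^[i] '' J n))
    (hdisj : ∀ n, ∀ i < q n, ∀ j < q n, i ≠ j → Disjoint (T^[i] '' J n) (T^[j] '' J n))
    (W : ℕ → Set X) (hW : ∀ n, W n = ⋃ i ∈ Finset.range (q n), T^[i] '' J n)
    (hpos : 0 < atTop.liminf (fun n => μ (W n)))
    (hJ0 : Tendsto (fun n => μ (J n)) atTop (nhds 0)) :
    ∀ᵐ x ∂μ, ∃ᶠ n in atTop, x ∈ W n :=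
  stmt14_general μ T hbij hErg q J hlevels W hW hpos hJ0
end

section
/- Let $0 < \alpha \leq 1$, $0 \leq \beta \leq 1$, and let $P = \sum_{i=0}^m c_i \delta_{d_i}$ be a discrete probability measure on $\mathbb{R}$ with $d_0 = 0$, $c_i > 0$ for $i \geq 1$, $\sum_{i=1}^m c_i > \frac{1-\alpha}{\alpha}$, and $d_i \neq -d_j$ for all $i \neq j$ in $\{0,\ldots,m\}$ (in particular $d_i \neq 0$ for $i \geq 1$). Let $P^- = \sum_{i=0}^m c_i \delta_{-d_i}$. Then there do NOT exist probability measures $\eta_1, \eta_2$ on $\mathbb{R}$ such that $\alpha P + \beta(1-\alpha)\eta_1 = \alpha P^- + \beta(1-\alpha)\eta_2$. -/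
/-!
Evaluate both sides of the identity on the finite set `A = {d₁, …, dₘ}`. By the condition
`dᵢ ≠ -dⱼ` (together with `d₀ = 0`, which makes `dᵢ ≠ 0` for `i ≥ 1`) no atom `-dᵢ` of `P⁻` lies
in `A`, so the right-hand side gives `A` mass at most `β(1-α) ≤ 1-α`, while the left-hand side
gives it mass at least `α ∑_{i≥1} cᵢ > 1-α`.
-/

open MeasureTheory ENNReal

theorem ENNReal.ofReal_sum_le {ι : Type*} (s : Finset ι) (f : ι → ℝ) :
    ENNReal.ofReal (∑ i ∈ s, f i) ≤ ∑ i ∈ s, ENNReal.ofReal (f i) :=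
  Finset.le_sum_of_subadditive _ ofReal_zero.le (fun _ _ ↦ ofReal_add_le) s f

namespace MeasureTheory.Measure

variable {Ω ι : Type*} [MeasurableSpace Ω]

open Classical in
theorem finsetSum_smul_dirac_apply [MeasurableSingletonClass Ω] (s : Finset ι) (w : ι → ℝ≥0∞)
    (x : ι → Ω) (A : Set Ω) :
    (∑ i ∈ s, w i • dirac (x i)) A = ∑ i ∈ s with x i ∈ A, w i := by
  simp [finsetSum_apply, dirac_apply, Finset.sum_filter, Set.indicator_apply]

theorem mul_apply_le_of_smul_add_eq {μ ν η₁ η₂ : Measure Ω} [IsProbabilityMeasure η₂]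
    {a b : ℝ≥0∞} (h : a • μ + b • η₁ = a • ν + b • η₂) {A : Set Ω} (hν : ν A = 0) :
    a * μ A ≤ b :=
  calc a * μ A ≤ (a • μ + b • η₁) A := by simp
    _ = b * η₂ A := by simp [h, hν]
    _ ≤ b := mul_le_of_le_one_right' prob_le_one

end MeasureTheory.Measure

theorem neg_notMem_image_Icc_one {d : ℕ → ℝ} {m : ℕ} (hd0 : d 0 = 0)
    (hdij : ∀ i ≤ m, ∀ j ≤ m, i ≠ j → d i ≠ -d j) {i : ℕ} (hi : i ≤ m) :
    -d i ∉ (Finset.Icc 1 m).image d := by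
  simp only [Finset.mem_image, Finset.mem_Icc, not_exists, not_and]
  rintro j ⟨hj1, hjm⟩ hji
  rcases eq_or_ne j i with rfl | hne
  · have hj0 : d j = 0 := by linarith
    exact hdij j hjm 0 m.zero_le (by omega) (by simp [hj0, hd0])
  · exact hdij j hjm i hi hne hji

theorem stmt15_general (α β : ℝ) (hα : 0 < α) (hα1 : α ≤ 1) (hβ1 : β ≤ 1)
    (m : ℕ) (c : ℕ → ℝ) (d : ℕ → ℝ)
    (hd0 : d 0 = 0)
    (hbig : (1 - α) / α < ∑ i ∈ Finset.Icc 1 m, c i)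
    (hdij : ∀ i ≤ m, ∀ j ≤ m, i ≠ j → d i ≠ -d j) :
    ¬ ∃ (η₁ η₂ : Measure ℝ), IsProbabilityMeasure η₁ ∧ IsProbabilityMeasure η₂ ∧
      (ENNReal.ofReal α)
          • (∑ i ∈ Finset.range (m + 1), (ENNReal.ofReal (c i)) • Measure.dirac (d i))
        + (ENNReal.ofReal (β * (1 - α))) • η₁
      = (ENNReal.ofReal α)
          • (∑ i ∈ Finset.range (m + 1), (ENNReal.ofReal (c i)) • Measure.dirac (-(d i)))
        + (ENNReal.ofReal (β * (1 - α))) • η₂ := by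
  rintro ⟨η₁, η₂, -, _, heq⟩
  set A : Finset ℝ := (Finset.Icc 1 m).image d
  have hRHS :
      (∑ i ∈ Finset.range (m + 1), ENNReal.ofReal (c i) • Measure.dirac (-(d i))) A = 0 := by
    rw [Measure.finsetSum_smul_dirac_apply, Finset.sum_eq_zero]
    simp only [Finset.mem_filter, Finset.mem_range, Finset.mem_coe]
    exact fun i ⟨hi, hiA⟩ ↦ absurd hiA (neg_notMem_image_Icc_one hd0 hdij (by omega))
  have hLHS : ENNReal.ofReal (∑ i ∈ Finset.Icc 1 m, c i)
      ≤ (∑ i ∈ Finset.range (m + 1), ENNReal.ofReal (c i) • Measure.dirac (d i)) A := by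
    rw [Measure.finsetSum_smul_dirac_apply]
    refine (ofReal_sum_le _ _).trans (Finset.sum_le_sum_of_subset fun i hi ↦ ?_)
    simp only [Finset.mem_Icc] at hi
    simp only [Finset.mem_filter, Finset.mem_range, Finset.mem_coe, A]
    exact ⟨by omega, Finset.mem_image_of_mem d (Finset.mem_Icc.2 hi)⟩
  have hmass := Measure.mul_apply_le_of_smul_add_eq heq hRHS
  have hbig' : 1 - α < α * ∑ i ∈ Finset.Icc 1 m, c i := (div_lt_iff₀' hα).1 hbig
  have hlt : ENNReal.ofReal (β * (1 - α))
      < ENNReal.ofReal α * ENNReal.ofReal (∑ i ∈ Finset.Icc 1 m, c i) := by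
    rw [← ofReal_mul hα.le, ofReal_lt_ofReal_iff (by linarith)]
    nlinarith
  grw [← hLHS] at hmass
  exact hlt.not_ge hmass

/-- The asymmetry obstruction: if `P = ∑ cᵢ δ_{dᵢ}` with `d₀ = 0`, `cᵢ > 0` for `i ≥ 1`,
`∑_{i≥1} cᵢ > (1-α)/α` and `dᵢ ≠ -dⱼ` for `i ≠ j`, then there are no probability
measures `η₁, η₂` with `αP + β(1-α)η₁ = αP⁻ + β(1-α)η₂`. -/
theorem stmt15 (α β : ℝ) (hα : 0 < α) (hα1 : α ≤ 1) (hβ0 : 0 ≤ β) (hβ1 : β ≤ 1)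
    (m : ℕ) (c : ℕ → ℝ) (d : ℕ → ℝ)
    (hc0 : 0 ≤ c 0) (hcpos : ∀ i, 1 ≤ i → i ≤ m → 0 < c i)
    (hsum1 : ∑ i ∈ Finset.range (m + 1), c i = 1)
    (hd0 : d 0 = 0)
    (hbig : (1 - α) / α < ∑ i ∈ Finset.Icc 1 m, c i)
    (hdij : ∀ i ≤ m, ∀ j ≤ m, i ≠ j → d i ≠ -d j) :
    ¬ ∃ (η₁ η₂ : Measure ℝ), IsProbabilityMeasure η₁ ∧ IsProbabilityMeasure η₂ ∧
      (ENNReal.ofReal α)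
          • (∑ i ∈ Finset.range (m + 1), (ENNReal.ofReal (c i)) • Measure.dirac (d i))
        + (ENNReal.ofReal (β * (1 - α))) • η₁
      = (ENNReal.ofReal α)
          • (∑ i ∈ Finset.range (m + 1), (ENNReal.ofReal (c i)) • Measure.dirac (-(d i)))
        + (ENNReal.ofReal (β * (1 - α))) • η₂ :=
  stmt15_general α β hα hα1 hβ1 m c d hd0 hbig hdij
end

section
/- Let $T$ be a measure-preserving transformation of a probability space $(X,\mu)$, $\phi: \mathbb{R}^2 \to \mathbb{R}$ bounded and uniformly continuous, $\{W_n\}$ measurable sets with $\mu(W_n \triangle T^{-1}W_n) \to 0$, $\xi \in L^\infty(X,\mu)$, and measurable functions $F_n, G_n: X \to \mathbb{R}$ such that $\chi_{W_n}\cdot(F_n \circ T - F_n) \to 0$ and $\chi_{W_n}\cdot(G_n \circ T - G_n) \to 0$ in measure. Then $\int_{W_n} \phi(F_n(x), G_n(x)) (\xi(x) - \xi(Tx))\, d\mu(x) \to 0$ as $n \to \infty$. -/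
open MeasureTheory Filter

/-!
With `h = W.indicator φ(F, G)`, invariance of `μ` under `T` turns
`∫_W φ(F, G) (ξ - ξ ∘ T)` into `∫ (h ∘ T - h) · ξ ∘ T`. Off `W ∆ T⁻¹ W` the increment `h ∘ T - h`
equals `W.indicator (φ(F ∘ T, G ∘ T) - φ(F, G))`, which tends to `0` in measure by uniform
continuity of `φ`. Being uniformly bounded, `h ∘ T - h` then tends to `0` in `L¹`, which suffices
since `ξ` is bounded.
-/

open scoped Topology

namespace MeasureTheory

variable {α ι E : Type*} [MeasurableSpace α] {μ : Measure α} {l : Filter ι}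

lemma tendsto_measure_of_subset_union {s t u : ι → Set α}
    (hs : Tendsto (fun i => μ (s i)) l (𝓝 0)) (ht : Tendsto (fun i => μ (t i)) l (𝓝 0))
    (hu : ∀ i, u i ⊆ s i ∪ t i) : Tendsto (fun i => μ (u i)) l (𝓝 0) := by
  refine tendsto_of_tendsto_of_tendsto_of_le_of_le tendsto_const_nhds (by simpa using hs.add ht)
    (fun _ => bot_le) fun i => ?_
  exact (measure_mono (hu i)).trans (measure_union_le _ _)

lemma TendstoInMeasure.prodMk {F : Type*} [PseudoMetricSpace E] [PseudoMetricSpace F]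
    {f : ι → α → E} {g : ι → α → F} {f₀ : α → E} {g₀ : α → F}
    (hf : TendstoInMeasure μ f l f₀) (hg : TendstoInMeasure μ g l g₀) :
    TendstoInMeasure μ (fun i x => (f i x, g i x)) l (fun x => (f₀ x, g₀ x)) := by
  rw [tendstoInMeasure_iff_dist] at *
  refine fun ε hε => tendsto_measure_of_subset_union (hf ε hε) (hg ε hε) fun i x hx => ?_
  simpa [Prod.dist_eq, le_max_iff] using hx

lemma UniformContinuous.tendstoInMeasure_indicator_comp_sub {F : Type*}
    [SeminormedAddCommGroup E] [SeminormedAddCommGroup F] {φ : E → F} (hφ : UniformContinuous φ)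
    {W : ι → Set α} {P Q : ι → α → E}
    (h : TendstoInMeasure μ (fun i => (W i).indicator (P i - Q i)) l 0) :
    TendstoInMeasure μ (fun i => (W i).indicator fun x => φ (P i x) - φ (Q i x)) l 0 := by
  rw [tendstoInMeasure_iff_norm] at *
  intro ε hε
  obtain ⟨δ, hδ, hφδ⟩ := Metric.uniformContinuous_iff.mp hφ ε hε
  refine tendsto_of_tendsto_of_tendsto_of_le_of_le tendsto_const_nhds (h δ hδ)
    (fun _ => bot_le) fun i => measure_mono fun x hx => ?_
  by_cases hx' : x ∈ W i
  · simp only [Set.mem_ofPred_eq, Pi.zero_apply, sub_zero, Set.indicator_of_mem hx',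
      Pi.sub_apply] at hx ⊢
    by_contra! hPQ
    rw [← dist_eq_norm] at hx hPQ
    exact hx.not_gt (hφδ hPQ)
  · simp only [Set.mem_ofPred_eq, Set.indicator_of_notMem hx', Pi.zero_apply, sub_zero,
      norm_zero] at hx
    exact (hε.not_ge hx).elim

lemma TendstoInMeasure.indicator_comp_sub [SeminormedAddCommGroup E] {T : α → α}
    {W : ι → Set α} {f : ι → α → E}
    (hW : Tendsto (fun i => μ (symmDiff (W i) (T ⁻¹' W i))) l (𝓝 0))
    (h : TendstoInMeasure μ (fun i => (W i).indicator fun x => f i (T x) - f i x) l 0) :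
    TendstoInMeasure μ (fun i x => (W i).indicator (f i) (T x) - (W i).indicator (f i) x) l 0 := by
  rw [tendstoInMeasure_iff_norm] at *
  refine fun ε hε => tendsto_measure_of_subset_union hW (h ε hε) fun i x hx => ?_
  by_cases hxW : x ∈ symmDiff (W i) (T ⁻¹' W i)
  · exact Or.inl hxW
  · right
    have hiff : T x ∈ W i ↔ x ∈ W i := by
      simp only [Set.mem_symmDiff, Set.mem_preimage] at hxW
      tauto
    by_cases hx' : x ∈ W i
    · simpa [Set.indicator_of_mem hx', Set.indicator_of_mem (hiff.mpr hx')] using hx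
    · simpa [Set.indicator_of_notMem hx', Set.indicator_of_notMem (mt hiff.mp hx')] using hx

lemma tendsto_integral_norm_of_tendstoInMeasure [NormedAddCommGroup E] [IsFiniteMeasure μ]
    {f : ℕ → α → E} (hf : ∀ n, AEStronglyMeasurable (f n) μ) {C : ℝ} (hC : ∀ n x, ‖f n x‖ ≤ C)
    (h : TendstoInMeasure μ f atTop 0) : Tendsto (fun n => ∫ x, ‖f n x‖ ∂μ) atTop (𝓝 0) := by
  refine tendsto_of_subseq_tendsto fun ns hns => ?_
  obtain ⟨ms, -, hms⟩ := TendstoInMeasure.exists_seq_tendsto_ae fun ε hε => (h ε hε).comp hns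
  refine ⟨ms, ?_⟩
  simpa using tendsto_integral_of_dominated_convergence (fun _ => C) (fun n => (hf _).norm)
    (integrable_const C) (fun n => ae_of_all _ fun x => by simpa using hC _ x)
    (hms.mono fun x hx => hx.norm)

theorem MeasurePreserving.integral_mul_sub_comp {T : α → α} (hT : MeasurePreserving T μ μ)
    {f ξ : α → ℝ} (hfξ : Integrable (fun x => f x * ξ x) μ)
    (hfξT : Integrable (fun x => f x * ξ (T x)) μ) :
    ∫ x, f x * (ξ x - ξ (T x)) ∂μ = ∫ x, (f (T x) - f x) * ξ (T x) ∂μ := by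
  have hcomp : ∫ x, f (T x) * ξ (T x) ∂μ = ∫ x, f x * ξ x ∂μ := by
    have := integral_map (f := fun y => f y * ξ y) hT.measurable.aemeasurable
      (hT.map_eq ▸ hfξ.aestronglyMeasurable)
    rwa [hT.map_eq, eq_comm] at this
  have hfξcomp : Integrable (fun x => f (T x) * ξ (T x)) μ :=
    hT.integrable_comp_of_integrable hfξ
  simp_rw [mul_sub, sub_mul]
  rw [integral_sub hfξ hfξT, integral_sub hfξcomp hfξT, hcomp]

theorem MeasurePreserving.tendsto_setIntegral_mul_sub_comp [IsFiniteMeasure μ] {T : α → α}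
    (hT : MeasurePreserving T μ μ) {W : ℕ → Set α} (hW : ∀ n, MeasurableSet (W n))
    (hWT : Tendsto (fun n => μ (symmDiff (W n) (T ⁻¹' W n))) atTop (𝓝 0))
    {f : ℕ → α → ℝ} (hf : ∀ n, Measurable (f n)) {C : ℝ} (hfC : ∀ n x, |f n x| ≤ C)
    (hfT : TendstoInMeasure μ (fun n => (W n).indicator fun x => f n (T x) - f n x) atTop 0)
    {ξ : α → ℝ} (hξ : Measurable ξ) {Cξ : ℝ} (hξC : ∀ x, |ξ x| ≤ Cξ) :
    Tendsto (fun n => ∫ x in W n, f n x * (ξ x - ξ (T x)) ∂μ) atTop (𝓝 0) := by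
  set g : ℕ → α → ℝ := fun n => (W n).indicator (f n)
  have hgC : ∀ n x, ‖g n x‖ ≤ C := fun n x =>
    (norm_indicator_le_norm_self (f n) x).trans (hfC n x)
  have hgm : ∀ n, Measurable (g n) := fun n => (hf n).indicator (hW n)
  have hg : ∀ n, Integrable (g n) μ := fun n =>
    .of_bound (hgm n).aestronglyMeasurable C (ae_of_all _ (hgC n))
  have hξT : Measurable fun x => ξ (T x) := hξ.comp hT.measurable
  have hdiff : Tendsto (fun n => ∫ x, ‖g n (T x) - g n x‖ ∂μ) atTop (𝓝 0) :=
    tendsto_integral_norm_of_tendstoInMeasure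
      (fun n => (((hgm n).comp hT.measurable).sub (hgm n)).aestronglyMeasurable)
      (C := C + C) (fun n x => (norm_sub_le _ _).trans (add_le_add (hgC n _) (hgC n x)))
      (hfT.indicator_comp_sub hWT)
  refine squeeze_zero_norm (fun n => ?_) (by simpa using hdiff.const_mul Cξ)
  rw [← integral_indicator (hW n)]
  simp_rw [Set.indicator_mul_left]
  rw [hT.integral_mul_sub_comp ((hg n).mul_bdd hξ.aestronglyMeasurable (ae_of_all _ hξC))
    ((hg n).mul_bdd hξT.aestronglyMeasurable (ae_of_all _ fun x => hξC (T x))),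
    ← integral_const_mul]
  have hgT : Integrable (fun x => g n (T x)) μ := hT.integrable_comp_of_integrable (hg n)
  refine norm_integral_le_of_norm_le ((hgT.sub (hg n)).norm.const_mul Cξ)
    (ae_of_all _ fun x => ?_)
  rw [norm_mul, mul_comm]
  exact mul_le_mul_of_nonneg_right (hξC (T x)) (norm_nonneg _)

end MeasureTheory

/-- Coboundary cancellation: if `μ(W n ∆ T⁻¹ W n) → 0` and
`χ_{W n}·(F n ∘ T - F n) → 0`, `χ_{W n}·(G n ∘ T - G n) → 0` in measure, then for bounded
uniformly continuous `φ` and bounded `ξ`,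
`∫_{W n} φ(F n, G n)(ξ - ξ ∘ T) dμ → 0`. -/
theorem stmt18 {X : Type*} [MeasurableSpace X] (μ : Measure X) [IsProbabilityMeasure μ]
    (T : X → X) (hT : MeasurePreserving T μ μ)
    (φ : ℝ × ℝ → ℝ) (hφu : UniformContinuous φ) (Cφ : ℝ) (hφb : ∀ p, |φ p| ≤ Cφ)
    (W : ℕ → Set X) (hWmeas : ∀ n, MeasurableSet (W n))
    (hWsym : Tendsto (fun n => μ (symmDiff (W n) (T ⁻¹' W n))) atTop (nhds 0))
    (ξ : X → ℝ) (hξm : Measurable ξ) (Cξ : ℝ) (hξb : ∀ x, |ξ x| ≤ Cξ)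
    (F G : ℕ → X → ℝ) (hF : ∀ n, Measurable (F n)) (hG : ∀ n, Measurable (G n))
    (hFrig : TendstoInMeasure μ
      (fun n => (W n).indicator (fun x => F n (T x) - F n x)) atTop (0 : X → ℝ))
    (hGrig : TendstoInMeasure μ
      (fun n => (W n).indicator (fun x => G n (T x) - G n x)) atTop (0 : X → ℝ)) :
    Tendsto (fun n => ∫ x in W n, φ (F n x, G n x) * (ξ x - ξ (T x)) ∂μ)
      atTop (nhds 0) := by
  have hFG : TendstoInMeasure μ (fun n => (W n).indicator
      ((fun x => (F n (T x), G n (T x))) - fun x => (F n x, G n x))) atTop 0 := by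
    convert hFrig.prodMk hGrig using 2 with n
    · ext x : 1
      by_cases hx : x ∈ W n <;> simp [hx, Prod.zero_eq_mk]
    · rfl
  exact hT.tendsto_setIntegral_mul_sub_comp hWmeas hWsym
    (fun n => hφu.continuous.measurable.comp ((hF n).prodMk (hG n))) (fun n x => hφb _)
    (hφu.tendstoInMeasure_indicator_comp_sub hFG) hξm hξb
end
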